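/- For two points [V], [W] of the Lagrangian Grassmannian LG(N,2N), the Hamming distance between them (in the minimal embedding) equals N − dim(V ∩ W). -/

import Mathlib

/-!
STATEMENT 6: For two points `[V], [W]` of the Lagrangian Grassmannian `LG(N, 2N)`, the
Hamming distance between them in the minimal embedding equals `N − dim(V ∩ W)`.

A line of `ℙ(Λ^N ℂ^{2N})` through two distinct points of `LG(N,2N)` is fully contained in
`LG(N,2N)` exactly when the two Lagrangian subspaces meet in dimension `N − 1` (the pencil
of Lagrangians through a fixed `(N−1)`-dimensional isotropic subspace).  Hence the Hamming
distance is the least `r` such that there is a chain of `r + 1` Lagrangian subspaces from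
`V` to `W` in which consecutive members meet in dimension at least `N − 1`.
-/

open LinearMap (BilinForm)

variable {V₀ : Type*} [AddCommGroup V₀] [Module ℂ V₀]

/-- A Lagrangian subspace: `N`-dimensional and isotropic. -/
def IsLagrangian (ω : BilinForm ℂ V₀) (N : ℕ) (L : Submodule ℂ V₀) : Prop :=
  Module.finrank ℂ L = N ∧ L ≤ ω.orthogonal L

/-- Hamming distance between two points of `LG(N,2N)` in the minimal (Plücker) embedding:
minimal number of lines contained in `LG(N,2N)` joining them, i.e. minimal length of a
chain of Lagrangians in which consecutive members meet in codimension at most one. -/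
noncomputable def lagrangianHammingDist (ω : BilinForm ℂ V₀) (N : ℕ)
    (L L' : Submodule ℂ V₀) : ℕ :=
  sInf {r | ∃ c : Fin (r + 1) → Submodule ℂ V₀,
    (∀ i, IsLagrangian ω N (c i)) ∧ c 0 = L ∧ c (Fin.last r) = L' ∧
    ∀ i : Fin r, N - 1 ≤ Module.finrank ℂ (c i.castSucc ⊓ c i.succ : Submodule ℂ V₀)}

open Module Submodule in
/-- One step of the construction: given distinct Lagrangians `L ≠ L'`, there is a
Lagrangian `L₁` meeting `L` in dimension `≥ N - 1` and meeting `L'` in a strictly bigger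
dimension than `L` does. -/
lemma lagrangian_exists_step (N : ℕ) [FiniteDimensional ℂ V₀]
    (hV : Module.finrank ℂ V₀ = 2 * N)
    (ω : BilinForm ℂ V₀) (halt : ω.IsAlt) (hnd : ω.Nondegenerate)
    {L L' : Submodule ℂ V₀} (hL : IsLagrangian ω N L) (hL' : IsLagrangian ω N L')
    (hne : L ≠ L') :
    ∃ L₁, IsLagrangian ω N L₁ ∧ N - 1 ≤ finrank ℂ (L ⊓ L₁ : Submodule ℂ V₀) ∧
      finrank ℂ (L ⊓ L' : Submodule ℂ V₀) < finrank ℂ (L₁ ⊓ L' : Submodule ℂ V₀) := by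
  have hrefl : ω.IsRefl := halt.isRefl
  have hN : 1 ≤ N := by
    by_contra h
    have h0 : N = 0 := by omega
    have h1 : L = ⊥ := Submodule.finrank_eq_zero.mp (by rw [hL.1, h0])
    have h2 : L' = ⊥ := Submodule.finrank_eq_zero.mp (by rw [hL'.1, h0])
    exact hne (h1.trans h2.symm)
  -- `L` is its own orthogonal
  have horthrank : finrank ℂ (ω.orthogonal L) = N := by
    rw [LinearMap.BilinForm.finrank_orthogonal hnd, hV, hL.1]; omega
  have horth : L = ω.orthogonal L :=
    Submodule.eq_of_le_of_finrank_le hL.2 (by rw [horthrank, hL.1])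
  -- a vector in `L'` not in `L`
  have hnle : ¬ L' ≤ L := fun hle =>
    hne (Submodule.eq_of_le_of_finrank_le hle (by rw [hL.1, hL'.1]) ).symm
  obtain ⟨v, hvL', hvL⟩ := SetLike.not_le_iff_exists.mp hnle
  have hv0 : v ≠ 0 := fun h => hvL (h ▸ L.zero_mem)
  -- the functional `ω v` is nonzero on `L`
  have hf : ∃ x ∈ L, ω v x ≠ 0 := by
    by_contra h
    push_neg at h
    apply hvL
    rw [horth]
    exact fun n hn => (halt.neg_eq v n ▸ neg_eq_zero.mpr (h n hn) : ω n v = 0)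
  -- the hyperplane `H` of `L`
  set H : Submodule ℂ V₀ := L ⊓ LinearMap.ker (ω v) with hH
  have hHle : H ≤ L := inf_le_left
  have hHker : ∀ x ∈ H, ω v x = 0 := fun x hx => hx.2
  have hHrank : finrank ℂ H = N - 1 := by
    set f : L →ₗ[ℂ] ℂ := (ω v).comp L.subtype with hfdef
    have hker : H = Submodule.map L.subtype (LinearMap.ker f) := by
      rw [hfdef, LinearMap.ker_comp, Submodule.map_comap_subtype]
    have h1 : finrank ℂ H = finrank ℂ (LinearMap.ker f) := by
      rw [hker, Submodule.finrank_map_subtype_eq]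
    have h2 : finrank ℂ (LinearMap.range f) + finrank ℂ (LinearMap.ker f)
        = finrank ℂ L := LinearMap.finrank_range_add_finrank_ker f
    have h3 : finrank ℂ (LinearMap.range f) = 1 := by
      have hle1 : finrank ℂ (LinearMap.range f) ≤ 1 := by
        simpa using (LinearMap.range f).finrank_le
      have hne0 : finrank ℂ (LinearMap.range f) ≠ 0 := by
        rw [Ne, Submodule.finrank_eq_zero, LinearMap.range_eq_bot]
        intro h0
        obtain ⟨x, hx, hx0⟩ := hf
        exact hx0 (by simpa [hfdef] using LinearMap.congr_fun h0 ⟨x, hx⟩)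
      omega
    rw [hL.1] at h2
    omega
  have hvH : v ∉ H := fun h => hvL (hHle h)
  refine ⟨H ⊔ ℂ ∙ v, ⟨?_, ?_⟩, ?_, ?_⟩
  · -- dimension N
    have hdisj : H ⊓ (ℂ ∙ v) = ⊥ := by
      rw [eq_bot_iff]
      rintro x ⟨hxH, hxv⟩
      obtain ⟨a, rfl⟩ := Submodule.mem_span_singleton.mp hxv
      rcases eq_or_ne a 0 with rfl | ha
      · simp
      · exact absurd (by simpa [ha] using H.smul_mem a⁻¹ hxH) hvH
    have := Submodule.finrank_sup_add_finrank_inf_eq H (ℂ ∙ v)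
    rw [hdisj, hHrank, finrank_span_singleton hv0, finrank_bot ℂ V₀] at this
    omega
  · -- isotropic
    intro m hm
    rw [LinearMap.BilinForm.mem_orthogonal_iff]
    intro n hn
    obtain ⟨x, hx, y, hy, rfl⟩ := Submodule.mem_sup.mp hm
    obtain ⟨x', hx', y', hy', rfl⟩ := Submodule.mem_sup.mp hn
    obtain ⟨a, rfl⟩ := Submodule.mem_span_singleton.mp hy
    obtain ⟨b, rfl⟩ := Submodule.mem_span_singleton.mp hy'
    have h1 : ω x' x = 0 := hL.2 (hHle hx) _ (hHle hx')
    have h2 : ω v x = 0 := hHker x hx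
    have h3 : ω x' v = 0 := by
      rw [← halt.neg_eq v x', hHker x' hx', neg_zero]
    have h4 : ω v v = 0 := halt.self_eq_zero v
    show ω (x' + b • v) (x + a • v) = 0
    simp [map_add, map_smul, h1, h2, h3, h4]
  · -- meets L in dim ≥ N - 1
    have : H ≤ L ⊓ (H ⊔ ℂ ∙ v) := le_inf hHle le_sup_left
    calc N - 1 = finrank ℂ H := hHrank.symm
      _ ≤ _ := Submodule.finrank_mono this
  · -- meets L' in strictly bigger dimension
    refine Submodule.finrank_lt_finrank_of_lt (SetLike.lt_iff_le_and_exists.mpr ⟨?_, v, ?_, ?_⟩)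
    · -- L ⊓ L' ≤ (H ⊔ ℂ ∙ v) ⊓ L'
      rintro x ⟨hxL, hxL'⟩
      refine ⟨Submodule.mem_sup_left ⟨hxL, ?_⟩, hxL'⟩
      exact hL'.2 hxL' _ hvL'
    · exact ⟨Submodule.mem_sup_right (Submodule.mem_span_singleton_self v), hvL'⟩
    · exact fun h => hvL h.1

open Module in
/-- Existence of a chain of any length `≥ N - dim (L ⊓ L')`. -/
lemma lagrangian_exists_chain (N : ℕ) [FiniteDimensional ℂ V₀]
    (hV : Module.finrank ℂ V₀ = 2 * N)
    (ω : BilinForm ℂ V₀) (halt : ω.IsAlt) (hnd : ω.Nondegenerate) :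
    ∀ k : ℕ, ∀ L L' : Submodule ℂ V₀, IsLagrangian ω N L → IsLagrangian ω N L' →
    N - finrank ℂ (L ⊓ L' : Submodule ℂ V₀) ≤ k →
    ∃ c : Fin (k + 1) → Submodule ℂ V₀,
      (∀ i, IsLagrangian ω N (c i)) ∧ c 0 = L ∧ c (Fin.last k) = L' ∧
      ∀ i : Fin k, N - 1 ≤ finrank ℂ (c i.castSucc ⊓ c i.succ : Submodule ℂ V₀) := by
  intro k
  induction k with
  | zero =>
    intro L L' hL hL' hle
    have hfr : finrank ℂ (L ⊓ L' : Submodule ℂ V₀) ≤ N :=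
      hL.1 ▸ Submodule.finrank_mono inf_le_left
    have heq : L = L' := by
      have h1 : L ⊓ L' = L := Submodule.eq_of_le_of_finrank_le inf_le_left
        (by rw [hL.1]; omega)
      have h2 : L ⊓ L' = L' := Submodule.eq_of_le_of_finrank_le inf_le_right
        (by rw [hL'.1]; omega)
      rw [← h1, h2]
    exact ⟨fun _ => L, fun _ => hL, rfl, heq ▸ rfl, fun i => i.elim0⟩
  | succ k ih =>
    intro L L' hL hL' hle
    by_cases heq : L = L'
    · subst heq
      refine ⟨fun _ => L, fun _ => hL, rfl, rfl, fun i => ?_⟩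
      rw [inf_idem, hL.1]; omega
    · obtain ⟨L₁, hL₁, hstep, hlt⟩ :=
        lagrangian_exists_step N hV ω halt hnd hL hL' heq
      obtain ⟨c', h1, h2, h3, h4⟩ := ih L₁ L' hL₁ hL' (by omega)
      refine ⟨Fin.cons L c', ?_, ?_, ?_, ?_⟩
      · intro i
        induction i using Fin.cases with
        | zero => simpa using hL
        | succ j => simpa using h1 j
      · simp
      · rw [← Fin.succ_last, Fin.cons_succ, h3]
      · intro i
        induction i using Fin.cases with
        | zero =>
          have : (0 : Fin (k + 1)).castSucc = 0 := rfl
          rw [this, Fin.cons_zero, Fin.cons_succ, h2]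
          exact hstep
        | succ j =>
          rw [← Fin.succ_castSucc, Fin.cons_succ, Fin.cons_succ]
          exact h4 j

open Module in
/-- Along a chain, the intersection with the first member drops by at most one at each
step. -/
lemma lagrangian_chain_bound (N : ℕ) [FiniteDimensional ℂ V₀]
    (ω : BilinForm ℂ V₀) {r : ℕ} {c : Fin (r + 1) → Submodule ℂ V₀}
    (hlag : ∀ i, IsLagrangian ω N (c i))
    (hch : ∀ i : Fin r, N - 1 ≤ finrank ℂ (c i.castSucc ⊓ c i.succ : Submodule ℂ V₀)) :
    ∀ i : Fin (r + 1), N - i.val ≤ finrank ℂ (c 0 ⊓ c i : Submodule ℂ V₀) := by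
  intro i
  induction i using Fin.induction with
  | zero => rw [inf_idem, (hlag 0).1]; omega
  | succ i ih =>
    have key := Submodule.finrank_sup_add_finrank_inf_eq
      (c 0 ⊓ c i.castSucc) (c i.castSucc ⊓ c i.succ)
    have hsup : finrank ℂ ((c 0 ⊓ c i.castSucc) ⊔ (c i.castSucc ⊓ c i.succ) :
        Submodule ℂ V₀) ≤ N := by
      rw [← (hlag i.castSucc).1]
      exact Submodule.finrank_mono (sup_le inf_le_right inf_le_left)
    have hmono : finrank ℂ ((c 0 ⊓ c i.castSucc) ⊓ (c i.castSucc ⊓ c i.succ) :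
        Submodule ℂ V₀) ≤ finrank ℂ (c 0 ⊓ c i.succ : Submodule ℂ V₀) :=
      Submodule.finrank_mono (le_inf (le_trans inf_le_left inf_le_left)
        (le_trans inf_le_right inf_le_right))
    have hc := hch i
    have hival : (i.succ : Fin (r + 1)).val = i.val + 1 := rfl
    have hcast : (i.castSucc : Fin (r + 1)).val = i.val := rfl
    omega

theorem lagrangian_hamming_eq (N : ℕ) [FiniteDimensional ℂ V₀]
    (hV : Module.finrank ℂ V₀ = 2 * N)
    (ω : BilinForm ℂ V₀) (halt : ω.IsAlt) (hnd : ω.Nondegenerate)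
    (L L' : Submodule ℂ V₀) (hL : IsLagrangian ω N L) (hL' : IsLagrangian ω N L') :
    lagrangianHammingDist ω N L L'
      = N - Module.finrank ℂ (L ⊓ L' : Submodule ℂ V₀) := by
  set d := Module.finrank ℂ (L ⊓ L' : Submodule ℂ V₀) with hd
  have hmem : (N - d) ∈ {r | ∃ c : Fin (r + 1) → Submodule ℂ V₀,
      (∀ i, IsLagrangian ω N (c i)) ∧ c 0 = L ∧ c (Fin.last r) = L' ∧
      ∀ i : Fin r, N - 1 ≤ Module.finrank ℂ (c i.castSucc ⊓ c i.succ : Submodule ℂ V₀)} :=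
    lagrangian_exists_chain N hV ω halt hnd (N - d) L L' hL hL' le_rfl
  have hlb : ∀ r ∈ {r | ∃ c : Fin (r + 1) → Submodule ℂ V₀,
      (∀ i, IsLagrangian ω N (c i)) ∧ c 0 = L ∧ c (Fin.last r) = L' ∧
      ∀ i : Fin r, N - 1 ≤ Module.finrank ℂ (c i.castSucc ⊓ c i.succ : Submodule ℂ V₀)},
      N - d ≤ r := by
    rintro r ⟨c, hlag, hc0, hclast, hch⟩
    have := lagrangian_chain_bound N ω hlag hch (Fin.last r)
    rw [hc0, hclast] at this
    have hlv : (Fin.last r).val = r := rfl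
    rw [hlv] at this
    omega
  refine le_antisymm (Nat.sInf_le hmem) ?_
  exact hlb _ (Nat.sInf_mem ⟨_, hmem⟩)
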